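/- arXiv:1004.0025 — 3 statements merged into one kernel-verified Lean document; each statement's English description precedes it below -/
import Mathlib

section
/- The set of rational numbers r for which there exist regular integers p and q with 1 < p ≤ 128, 1 < q ≤ 54, r = p/q and 1 < r < 1 + √2 has exactly 38 elements. -/
/-- A positive integer is regular if it is of the form `2^a · 3^b · 5^c`. -/
def Regular (n : ℕ) : Prop := ∃ a b c : ℕ, n = 2 ^ a * 3 ^ b * 5 ^ c

/-- Bounded, decidable version of regularity. -/
def RegularB (n : ℕ) : Prop := ∃ a < 8, ∃ b < 5, ∃ c < 4, n = 2 ^ a * 3 ^ b * 5 ^ c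

instance : DecidablePred RegularB := fun n => by unfold RegularB; infer_instance

lemma regular_iff {n : ℕ} (hn : n ≤ 128) : Regular n ↔ RegularB n := by
  constructor
  · rintro ⟨a, b, c, rfl⟩
    have h2a : 1 ≤ 2 ^ a := Nat.one_le_pow _ _ (by norm_num)
    have h3b : 1 ≤ 3 ^ b := Nat.one_le_pow _ _ (by norm_num)
    have h5c : 1 ≤ 5 ^ c := Nat.one_le_pow _ _ (by norm_num)
    have h2 : 2 ^ a ≤ 128 := by
      calc 2 ^ a = 2 ^ a * 1 * 1 := by ring
        _ ≤ 2 ^ a * 3 ^ b * 5 ^ c := Nat.mul_le_mul (Nat.mul_le_mul le_rfl h3b) h5c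
        _ ≤ 128 := hn
    have h3 : 3 ^ b ≤ 128 := by
      calc 3 ^ b = 1 * 3 ^ b * 1 := by ring
        _ ≤ 2 ^ a * 3 ^ b * 5 ^ c := Nat.mul_le_mul (Nat.mul_le_mul h2a le_rfl) h5c
        _ ≤ 128 := hn
    have h5 : 5 ^ c ≤ 128 := by
      calc 5 ^ c = 1 * 1 * 5 ^ c := by ring
        _ ≤ 2 ^ a * 3 ^ b * 5 ^ c := Nat.mul_le_mul (Nat.mul_le_mul h2a h3b) le_rfl
        _ ≤ 128 := hn
    have ha : a < 8 := by
      by_contra h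
      have : 2 ^ 8 ≤ 2 ^ a := Nat.pow_le_pow_right (by norm_num) (by omega)
      omega
    have hb : b < 5 := by
      by_contra h
      have : 3 ^ 5 ≤ 3 ^ b := Nat.pow_le_pow_right (by norm_num) (by omega)
      omega
    have hc : c < 4 := by
      by_contra h
      have : 5 ^ 4 ≤ 5 ^ c := Nat.pow_le_pow_right (by norm_num) (by omega)
      omega
    exact ⟨a, ha, b, hb, c, hc, rfl⟩
  · rintro ⟨a, _, b, _, c, _, rfl⟩
    exact ⟨a, b, c, rfl⟩

lemma sqrt_ineq {p q : ℕ} (hq0 : 0 < q) (hqp : q < p) :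
    ((p : ℝ) / q < 1 + Real.sqrt 2) ↔ ((p - q) ^ 2 < 2 * q ^ 2) := by
  have hqR : (0 : ℝ) < q := by exact_mod_cast hq0
  have hsub : ((p - q : ℕ) : ℝ) = (p : ℝ) - q := by
    push_cast [Nat.cast_sub hqp.le]; ring
  have hpos : (0 : ℝ) ≤ (p : ℝ) - q := by
    have : (q : ℝ) < p := by exact_mod_cast hqp
    linarith
  have hsqrt : Real.sqrt 2 * q = Real.sqrt (2 * q ^ 2) := by
    rw [Real.sqrt_mul (by norm_num), Real.sqrt_sq hqR.le]
  rw [div_lt_iff₀ hqR]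
  constructor
  · intro h
    have h' : (p : ℝ) - q < Real.sqrt (2 * q ^ 2) := by rw [← hsqrt]; nlinarith
    have h2 : ((p - q : ℕ) : ℝ) ^ 2 < 2 * (q : ℝ) ^ 2 := by
      rw [hsub]
      exact (Real.lt_sqrt hpos).mp h'
    exact_mod_cast h2
  · intro h
    have h2 : ((p - q : ℕ) : ℝ) ^ 2 < 2 * (q : ℝ) ^ 2 := by exact_mod_cast h
    have h' : (p : ℝ) - q < Real.sqrt (2 * q ^ 2) := by
      rw [← hsub]
      exact (Real.lt_sqrt (hsub ▸ hpos)).mpr h2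
    rw [← hsqrt] at h'
    nlinarith

/-- Regular numbers in `(1, 128]`. -/
def Ps : Finset ℕ := {2, 3, 4, 5, 6, 8, 9, 10, 12, 15, 16, 18, 20, 24, 25, 27, 30, 32, 36,
  40, 45, 48, 50, 54, 60, 64, 72, 75, 80, 81, 90, 96, 100, 108, 120, 125, 128}

/-- Regular numbers in `(1, 54]`. -/
def Qs : Finset ℕ := {2, 3, 4, 5, 6, 8, 9, 10, 12, 15, 16, 18, 20, 24, 25, 27, 30, 32, 36,
  40, 45, 48, 50, 54}

set_option maxRecDepth 40000 in
lemma mem_Ps : ∀ p < 129, (p ∈ Ps ↔ (1 < p ∧ RegularB p)) := by decide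
lemma mem_Qs : ∀ q < 55, (q ∈ Qs ↔ (1 < q ∧ RegularB q)) := by decide
lemma Ps_prop : ∀ p ∈ Ps, 1 < p ∧ p ≤ 128 ∧ RegularB p := by decide
lemma Qs_prop : ∀ q ∈ Qs, 1 < q ∧ q ≤ 54 ∧ RegularB q := by decide

def T : Finset (ℕ × ℕ) :=
  (Ps ×ˢ Qs).filter fun x => x.2 < x.1 ∧ (x.1 - x.2) ^ 2 < 2 * x.2 ^ 2

def F : Finset ℚ := T.image fun x => (x.1 : ℚ) / x.2

/-- Reduce a pair to lowest terms. -/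
def g (x : ℕ × ℕ) : ℕ × ℕ := (x.1 / Nat.gcd x.1 x.2, x.2 / Nat.gcd x.1 x.2)

def T2 : Finset (ℕ × ℕ) := T.image g

set_option maxRecDepth 200000 in
lemma T2_card : T2.card = 38 := by decide

set_option maxRecDepth 200000 in
lemma T2_prop : ∀ x ∈ T2, 0 < x.1 ∧ 0 < x.2 ∧ Nat.gcd x.1 x.2 = 1 := by decide

set_option maxRecDepth 200000 in
lemma T_pos : ∀ x ∈ T, 0 < x.1 ∧ 0 < x.2 := by decide

lemma F_eq : F = T2.image fun x => (x.1 : ℚ) / x.2 := by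
  unfold F T2
  rw [Finset.image_image]
  refine Finset.image_congr ?_
  intro x hx
  obtain ⟨h1, h2⟩ := T_pos x hx
  have hd : 0 < Nat.gcd x.1 x.2 := Nat.gcd_pos_of_pos_left _ h1
  have hdQ : ((Nat.gcd x.1 x.2 : ℕ) : ℚ) ≠ 0 := by exact_mod_cast hd.ne'
  have h2Q : ((x.2 : ℕ) : ℚ) ≠ 0 := by exact_mod_cast h2.ne'
  have e1 : ((x.1 / Nat.gcd x.1 x.2 : ℕ) : ℚ) = (x.1 : ℚ) / (Nat.gcd x.1 x.2 : ℚ) :=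
    Nat.cast_div (Nat.gcd_dvd_left _ _) hdQ
  have e2 : ((x.2 / Nat.gcd x.1 x.2 : ℕ) : ℚ) = (x.2 : ℚ) / (Nat.gcd x.1 x.2 : ℚ) :=
    Nat.cast_div (Nat.gcd_dvd_right _ _) hdQ
  show (x.1 : ℚ) / (x.2 : ℚ)
      = ((x.1 / Nat.gcd x.1 x.2 : ℕ) : ℚ) / ((x.2 / Nat.gcd x.1 x.2 : ℕ) : ℚ)
  rw [e1, e2]
  field_simp

lemma F_card : F.card = 38 := by
  rw [F_eq, Finset.card_image_of_injOn, T2_card]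
  intro x hx y hy hxy
  obtain ⟨hx1, hx2, hxc⟩ := T2_prop x (by exact_mod_cast hx)
  obtain ⟨hy1, hy2, hyc⟩ := T2_prop y (by exact_mod_cast hy)
  have hx2Q : ((x.2 : ℕ) : ℚ) ≠ 0 := by exact_mod_cast hx2.ne'
  have hy2Q : ((y.2 : ℕ) : ℚ) ≠ 0 := by exact_mod_cast hy2.ne'
  have hcross : (x.1 : ℚ) * y.2 = y.1 * x.2 :=
    (div_eq_div_iff hx2Q hy2Q).mp hxy
  have hcn : x.1 * y.2 = y.1 * x.2 := by exact_mod_cast hcross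
  have d1 : x.1 ∣ y.1 * x.2 := hcn ▸ Dvd.intro _ rfl
  have d2 : y.1 ∣ x.1 * y.2 := hcn ▸ Dvd.intro _ rfl
  have e1 : x.1 = y.1 :=
    Nat.dvd_antisymm (Nat.Coprime.dvd_of_dvd_mul_right hxc d1)
      (Nat.Coprime.dvd_of_dvd_mul_right hyc d2)
  have e2 : x.2 = y.2 := by
    rw [e1] at hcn
    exact (Nat.eq_of_mul_eq_mul_left hy1 hcn).symm
  exact Prod.ext e1 e2

/-- There are exactly 38 admissible ratios `r = p/q` with regular integers
`1 < p ≤ 128` and `1 < q ≤ 54` and `1 < r < 1 + √2`. -/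
theorem price_procedure_one_card :
    {r : ℚ | ∃ p q : ℕ, Regular p ∧ Regular q ∧ 1 < p ∧ p ≤ 128 ∧ 1 < q ∧ q ≤ 54 ∧
      r = (p : ℚ) / q ∧ 1 < (r : ℝ) ∧ (r : ℝ) < 1 + Real.sqrt 2}.ncard = 38 := by
  have hset : {r : ℚ | ∃ p q : ℕ, Regular p ∧ Regular q ∧ 1 < p ∧ p ≤ 128 ∧ 1 < q ∧ q ≤ 54 ∧
      r = (p : ℚ) / q ∧ 1 < (r : ℝ) ∧ (r : ℝ) < 1 + Real.sqrt 2} = ↑F := by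
    ext r
    simp only [Set.mem_setOf_eq, F, Finset.coe_image, Set.mem_image, Finset.mem_coe,
      T, Finset.mem_filter, Finset.mem_product]
    constructor
    · rintro ⟨p, q, hp, hq, hp1, hp2, hq1, hq2, rfl, hr1, hr2⟩
      have hqR : (0 : ℝ) < q := by exact_mod_cast (show 0 < q by omega)
      have hcast : ((((p : ℚ) / q : ℚ)) : ℝ) = (p : ℝ) / q := by push_cast; ring
      rw [hcast] at hr1 hr2
      have hqp : q < p := by exact_mod_cast (one_lt_div hqR).mp hr1
      exact ⟨(p, q), ⟨⟨(mem_Ps p (by omega)).mpr ⟨hp1, (regular_iff hp2).mp hp⟩,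
        (mem_Qs q (by omega)).mpr ⟨hq1, (regular_iff (by omega)).mp hq⟩⟩,
        hqp, (sqrt_ineq (by omega) hqp).mp hr2⟩, rfl⟩
    · rintro ⟨⟨p, q⟩, ⟨⟨hpPs, hqQs⟩, hlt, hineq⟩, rfl⟩
      obtain ⟨hp1, hp2, hrp⟩ := Ps_prop p hpPs
      obtain ⟨hq1, hq2, hrq⟩ := Qs_prop q hqQs
      have hqR : (0 : ℝ) < q := by exact_mod_cast (show 0 < q by omega)
      have hcast : ((((p : ℚ) / q : ℚ)) : ℝ) = (p : ℝ) / q := by push_cast; ring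
      refine ⟨p, q, (regular_iff hp2).mpr hrp, (regular_iff (by omega)).mpr hrq,
        hp1, hp2, hq1, hq2, rfl, ?_, ?_⟩
      · rw [hcast, one_lt_div hqR]; exact_mod_cast hlt
      · rw [hcast]; exact (sqrt_ineq (by omega) hlt).mpr hineq
  rw [hset, Set.ncard_coe_finset, F_card]
end

section
/- The set of rational numbers r for which there exist regular integers p and q with 2 ≤ p ≤ 81, 2 ≤ q ≤ 81, r = p/q and 1 < r < 1 + √2 has exactly 40 elements. -/
set_option maxRecDepth 8000

namespace ProcFourAux

/-- The regular numbers between 2 and 81. -/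
def regL : List ℕ := [2, 3, 4, 5, 6, 8, 9, 10, 12, 15, 16, 18, 20, 24, 25, 27, 30, 32, 36, 40,
  45, 48, 50, 54, 60, 64, 72, 75, 80, 81]

/-- The 40 admissible ratios, as coprime pairs (num, den). -/
def L : List (ℕ × ℕ) := [(81,80), (25,24), (16,15), (27,25), (10,9), (9,8), (75,64), (32,27),
  (6,5), (5,4), (81,64), (32,25), (4,3), (27,20), (25,18), (45,32), (64,45), (36,25), (40,27),
  (3,2), (25,16), (8,5), (81,50), (5,3), (27,16), (16,9), (9,5), (50,27), (15,8), (48,25),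
  (2,1), (81,40), (25,12), (32,15), (54,25), (20,9), (9,4), (75,32), (64,27), (12,5)]

/-- Witness pairs with both entries in `regL` (only `(2,1)` needs adjusting). -/
def w (ab : ℕ × ℕ) : ℕ × ℕ := if ab = (2,1) then (4,2) else ab

lemma regular_of_mem {n : ℕ} (h : n ∈ regL) : Regular n := by
  have key : ∀ n ∈ regL, ∃ a < 7, ∃ b < 5, ∃ c < 3, n = 2 ^ a * 3 ^ b * 5 ^ c := by decide
  obtain ⟨a, -, b, -, c, -, h⟩ := key n h
  exact ⟨a, b, c, h⟩

lemma mem_regL {n : ℕ} (hr : Regular n) (h2 : 2 ≤ n) (h81 : n ≤ 81) : n ∈ regL := by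
  obtain ⟨a, b, c, rfl⟩ := hr
  have h3 : 0 < 3 ^ b * 5 ^ c := by positivity
  have h5 : 0 < 2 ^ a * 5 ^ c := by positivity
  have h2' : 0 < 2 ^ a * 3 ^ b := by positivity
  have ha : a < 7 := by
    have : 2 ^ a ≤ 81 := le_trans (Nat.le_mul_of_pos_right _ h3 |>.trans_eq (by ring)) h81
    by_contra hc
    exact absurd (le_trans (Nat.pow_le_pow_right (by norm_num) (not_lt.mp hc)) this) (by norm_num)
  have hb : b < 5 := by
    have : 3 ^ b ≤ 81 := le_trans (Nat.le_mul_of_pos_right _ h5 |>.trans_eq (by ring)) h81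
    by_contra hc
    exact absurd (le_trans (Nat.pow_le_pow_right (by norm_num) (not_lt.mp hc)) this) (by norm_num)
  have hc : c < 3 := by
    have : 5 ^ c ≤ 81 := le_trans (Nat.le_mul_of_pos_right _ h2' |>.trans_eq (by ring)) h81
    by_contra hc
    exact absurd (le_trans (Nat.pow_le_pow_right (by norm_num) (not_lt.mp hc)) this) (by norm_num)
  clear h3 h5 h2'
  interval_cases a <;> interval_cases b <;> interval_cases c <;> revert h2 h81 <;> decide

lemma key2 : ∀ p ∈ regL, ∀ q ∈ regL, q < p → p ^ 2 < 2 * p * q + q ^ 2 →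
    (p / Nat.gcd p q, q / Nat.gcd p q) ∈ L := by decide

lemma key3 : ∀ ab ∈ L, Nat.gcd ab.1 ab.2 = 1 ∧ 0 < ab.2 ∧ ab.2 < ab.1 := by decide

lemma key5 : ∀ ab ∈ L, (w ab).1 ∈ regL ∧ (w ab).2 ∈ regL ∧ 2 ≤ (w ab).2 ∧ (w ab).1 ≤ 81 ∧
    (w ab).2 < (w ab).1 ∧ (w ab).1 ^ 2 < 2 * (w ab).1 * (w ab).2 + (w ab).2 ^ 2 ∧
    ab.1 * (w ab).2 = (w ab).1 * ab.2 := by decide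

lemma card40 : L.toFinset.card = 40 := by decide

/-- The map from pairs to rationals. -/
def f (ab : ℕ × ℕ) : ℚ := (ab.1 : ℚ) / ab.2

lemma real_bounds {p q : ℕ} (hq0 : 0 < q) (hlt : q < p) (hub : p ^ 2 < 2 * p * q + q ^ 2) :
    1 < (((p : ℚ) / q : ℚ) : ℝ) ∧ (((p : ℚ) / q : ℚ) : ℝ) < 1 + Real.sqrt 2 := by
  have hq0R : (0 : ℝ) < q := by exact_mod_cast hq0
  have hltR : (q : ℝ) < p := by exact_mod_cast hlt
  have hubR : (p : ℝ) ^ 2 < 2 * p * q + q ^ 2 := by exact_mod_cast hub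
  have hcast : (((p : ℚ) / q : ℚ) : ℝ) = (p : ℝ) / q := by
    rw [Rat.cast_div, Rat.cast_natCast, Rat.cast_natCast]
  rw [hcast]
  set x : ℝ := (p : ℝ) / q with hx
  have hxq : x * q = p := div_mul_cancel₀ _ hq0R.ne'
  have h1 : 1 < x := by rw [lt_div_iff₀ hq0R]; linarith
  refine ⟨h1, ?_⟩
  have e : (x - 1) * q = (p : ℝ) - q := by rw [sub_mul, one_mul, hxq]
  have h3 : (x - 1) ^ 2 * q ^ 2 < 2 * q ^ 2 := by rw [← mul_pow, e]; nlinarith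
  have hsq : (x - 1) ^ 2 < 2 := lt_of_mul_lt_mul_right h3 (by positivity : (0:ℝ) ≤ q ^ 2)
  have := (Real.lt_sqrt (by linarith : (0:ℝ) ≤ x - 1)).mpr hsq
  linarith

theorem main : {r : ℚ | ∃ p q : ℕ, Regular p ∧ Regular q ∧ 2 ≤ p ∧ p ≤ 81 ∧ 2 ≤ q ∧ q ≤ 81 ∧
      r = (p : ℚ) / q ∧ 1 < (r : ℝ) ∧ (r : ℝ) < 1 + Real.sqrt 2}.ncard = 40 := by
  have hset : {r : ℚ | ∃ p q : ℕ, Regular p ∧ Regular q ∧ 2 ≤ p ∧ p ≤ 81 ∧ 2 ≤ q ∧ q ≤ 81 ∧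
      r = (p : ℚ) / q ∧ 1 < (r : ℝ) ∧ (r : ℝ) < 1 + Real.sqrt 2} = f '' (L.toFinset : Set (ℕ × ℕ)) := by
    ext r
    simp only [Set.mem_setOf_eq, Set.mem_image, Finset.mem_coe, List.mem_toFinset]
    constructor
    · rintro ⟨p, q, hp, hq, hp2, hp81, hq2, hq81, rfl, h1, h2⟩
      have hq0 : 0 < q := by omega
      have hq0Q : (0 : ℚ) < q := by exact_mod_cast hq0
      have hq0R : (0 : ℝ) < q := by exact_mod_cast hq0
      have hcast : (((p : ℚ) / q : ℚ) : ℝ) = (p : ℝ) / q := by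
        rw [Rat.cast_div, Rat.cast_natCast, Rat.cast_natCast]
      rw [hcast] at h1 h2
      set x : ℝ := (p : ℝ) / q with hx
      have hxq : x * q = p := div_mul_cancel₀ _ hq0R.ne'
      have hlt : q < p := by
        have : (q : ℝ) < p := by nlinarith
        exact_mod_cast this
      have hub : p ^ 2 < 2 * p * q + q ^ 2 := by
        have h2' : x - 1 < Real.sqrt 2 := by linarith
        have hsq : (x - 1) ^ 2 < 2 := (Real.lt_sqrt (by linarith : (0:ℝ) ≤ x - 1)).mp h2'
        have e : (x - 1) * q = (p : ℝ) - q := by rw [sub_mul, one_mul, hxq]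
        have h3 : ((p : ℝ) - q) ^ 2 < 2 * q ^ 2 := by
          rw [← e, mul_pow]
          exact mul_lt_mul_of_pos_right hsq (by positivity)
        have : (p : ℝ) ^ 2 < 2 * p * q + q ^ 2 := by nlinarith [h3]
        exact_mod_cast this
      set g := Nat.gcd p q with hg
      have hgp : g ∣ p := Nat.gcd_dvd_left p q
      have hgq : g ∣ q := Nat.gcd_dvd_right p q
      have hg0 : 0 < g := Nat.gcd_pos_of_pos_right _ hq0
      have hg0Q : ((g : ℚ)) ≠ 0 := by exact_mod_cast hg0.ne'
      refine ⟨(p / g, q / g), key2 p (mem_regL hp hp2 hp81) q (mem_regL hq hq2 hq81) hlt hub, ?_⟩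
      have e1 : ((p / g : ℕ) : ℚ) * g = p := by rw [← Nat.cast_mul, Nat.div_mul_cancel hgp]
      have e2 : ((q / g : ℕ) : ℚ) * g = q := by rw [← Nat.cast_mul, Nat.div_mul_cancel hgq]
      have hqg0 : ((q / g : ℕ) : ℚ) ≠ 0 := by
        have : 0 < q / g := Nat.div_pos (Nat.le_of_dvd hq0 hgq) hg0
        exact_mod_cast this.ne'
      show ((p / g : ℕ) : ℚ) / ((q / g : ℕ) : ℚ) = (p : ℚ) / q
      rw [div_eq_div_iff hqg0 hq0Q.ne']
      apply mul_right_cancel₀ hg0Q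
      linear_combination (q : ℚ) * e1 - (p : ℚ) * e2
    · rintro ⟨ab, hab, rfl⟩
      obtain ⟨h1cop, hb0, hblt⟩ := key3 ab hab
      obtain ⟨hw1, hw2, hw2q, hw81, hwlt, hwub, hcross⟩ := key5 ab hab
      refine ⟨(w ab).1, (w ab).2, regular_of_mem hw1, regular_of_mem hw2, by omega, hw81,
        hw2q, by omega, ?_, ?_⟩
      · show f ab = _
        unfold f
        have hb0Q : ((ab.2 : ℚ)) ≠ 0 := by exact_mod_cast hb0.ne'
        have hw2Q : (((w ab).2 : ℚ)) ≠ 0 := by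
          have : (0:ℕ) < (w ab).2 := by omega
          exact_mod_cast this.ne'
        rw [div_eq_div_iff hb0Q hw2Q]
        exact_mod_cast hcross
      · have heq : f ab = ((w ab).1 : ℚ) / ((w ab).2 : ℚ) := by
          unfold f
          have hb0Q : ((ab.2 : ℚ)) ≠ 0 := by exact_mod_cast hb0.ne'
          have hw2Q : (((w ab).2 : ℚ)) ≠ 0 := by
            have : (0:ℕ) < (w ab).2 := by omega
            exact_mod_cast this.ne'
          rw [div_eq_div_iff hb0Q hw2Q]
          exact_mod_cast hcross
        rw [heq]
        exact real_bounds (by omega) hwlt hwub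
  rw [hset, Set.ncard_image_of_injOn, Set.ncard_coe_finset, card40]
  intro ab hab cd hcd hfe
  simp only [Finset.mem_coe, List.mem_toFinset] at hab hcd
  obtain ⟨hab1, hab2, -⟩ := key3 ab hab
  obtain ⟨hcd1, hcd2, -⟩ := key3 cd hcd
  have hfe' : ((ab.1 : ℤ) : ℚ) / ((ab.2 : ℤ) : ℚ) = ((cd.1 : ℤ) : ℚ) / ((cd.2 : ℤ) : ℚ) := by
    push_cast
    exact_mod_cast hfe
  have := Rat.div_int_inj (by exact_mod_cast hab2) (by exact_mod_cast hcd2)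
    (by simpa [Nat.Coprime] using hab1) (by simpa [Nat.Coprime] using hcd1) hfe'
  have h1 : ab.1 = cd.1 := by exact_mod_cast this.1
  have h2 : ab.2 = cd.2 := by exact_mod_cast this.2
  exact Prod.ext h1 h2

end ProcFourAux

/-- There are exactly 40 admissible ratios `r = p/q` with regular integers
`2 ≤ p ≤ 81` and `2 ≤ q ≤ 81` and `1 < r < 1 + √2` (Procedure 4). -/
theorem procedure_four_card :
    {r : ℚ | ∃ p q : ℕ, Regular p ∧ Regular q ∧ 2 ≤ p ∧ p ≤ 81 ∧ 2 ≤ q ∧ q ≤ 81 ∧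
      r = (p : ℚ) / q ∧ 1 < (r : ℝ) ∧ (r : ℝ) < 1 + Real.sqrt 2}.ncard = 40 := by
  exact ProcFourAux.main
end

section
/- The set of rational numbers r such that there exist regular integers p, q with 1 < p ≤ 125, 1 < q ≤ 125, r = p/q, 1 < r < 1 + √2, and additionally r ≥ 9/5, is exactly the sixteen-element set consisting of {12/5, 64/27, 75/32, 125/54, 9/4, 20/9, 54/25, 32/15, 25/12, 81/40, 2, 48/25, 15/8, 50/27, 9/5} together with the single extra ratio 125/64. -/
def regList : List ℕ :=
  [2,3,4,5,6,8,9,10,12,15,16,18,20,24,25,27,30,32,36,40,45,48,50,54,60,64,72,75,80,81,90,96,100,108,120,125]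

lemma regular_mem {p : ℕ} (h : Regular p) (h1 : 1 < p) (h2 : p ≤ 125) : p ∈ regList := by
  obtain ⟨a, b, c, rfl⟩ := h
  have hbc : 0 < 3 ^ b * 5 ^ c := by positivity
  have hac : 0 < 2 ^ a * 5 ^ c := by positivity
  have hab : 0 < 2 ^ a * 3 ^ b := by positivity
  have ha : a ≤ 6 := by
    by_contra hh
    have h7 : (2:ℕ) ^ 7 ≤ 2 ^ a := Nat.pow_le_pow_right (by norm_num) (by omega)
    have : 2 ^ a ≤ 2 ^ a * (3 ^ b * 5 ^ c) := Nat.le_mul_of_pos_right _ hbc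
    have h2' : 2 ^ a * 3 ^ b * 5 ^ c = 2 ^ a * (3 ^ b * 5 ^ c) := by ring
    rw [h2'] at h2
    omega
  have hb : b ≤ 4 := by
    by_contra hh
    have h7 : (3:ℕ) ^ 5 ≤ 3 ^ b := Nat.pow_le_pow_right (by norm_num) (by omega)
    have : 3 ^ b ≤ 3 ^ b * (2 ^ a * 5 ^ c) := Nat.le_mul_of_pos_right _ hac
    have h2' : 2 ^ a * 3 ^ b * 5 ^ c = 3 ^ b * (2 ^ a * 5 ^ c) := by ring
    rw [h2'] at h2
    omega
  have hc : c ≤ 3 := by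
    by_contra hh
    have h7 : (5:ℕ) ^ 4 ≤ 5 ^ c := Nat.pow_le_pow_right (by norm_num) (by omega)
    have : 5 ^ c ≤ 5 ^ c * (2 ^ a * 3 ^ b) := Nat.le_mul_of_pos_right _ hab
    have h2' : 2 ^ a * 3 ^ b * 5 ^ c = 5 ^ c * (2 ^ a * 3 ^ b) := by ring
    rw [h2'] at h2
    omega
  interval_cases a <;> interval_cases b <;> interval_cases c <;>
    first
      | decide
      | (exact absurd h2 (by decide))
      | (exact absurd h1 (by decide))

lemma key : ∀ p ∈ regList, ∀ q ∈ regList, 9*q ≤ 5*p → (p-q)^2 < 2*q^2 →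
    (5*p=12*q ∨ 27*p=64*q ∨ 32*p=75*q ∨ 54*p=125*q ∨ 4*p=9*q ∨ 9*p=20*q ∨ 25*p=54*q ∨
     15*p=32*q ∨ 12*p=25*q ∨ 40*p=81*q ∨ p=2*q ∨ 25*p=48*q ∨ 8*p=15*q ∨ 27*p=50*q ∨
     5*p=9*q ∨ 64*p=125*q) := by decide

lemma conv (p q a b : ℕ) (hq : 0 < q) (ha : 0 < a) (h : a * p = b * q) :
    (p:ℚ)/q = (b:ℚ)/(a:ℚ) := by
  rw [div_eq_div_iff (by exact_mod_cast hq.ne') (by exact_mod_cast ha.ne')]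
  have : p * a = b * q := by rw [mul_comm]; exact h
  exact_mod_cast this

lemma sqrt_cond {r : ℚ} (h1 : 1 < r) : ((r:ℝ) < 1 + Real.sqrt 2 ↔ (r-1)^2 < 2) := by
  have h0 : (0:ℝ) ≤ (r:ℝ) - 1 := by
    have : (1:ℝ) < (r:ℝ) := by exact_mod_cast h1
    linarith
  constructor
  · intro h
    have hlt : (r:ℝ) - 1 < Real.sqrt 2 := by linarith
    have := (Real.lt_sqrt h0).mp hlt
    have : ((r:ℝ) - 1)^2 < 2 := this
    have : ((r - 1 : ℚ) : ℝ)^2 < 2 := by push_cast; push_cast at this; linarith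
    exact_mod_cast this
  · intro h
    have h' : ((r:ℝ) - 1)^2 < 2 := by
      have : ((r - 1 : ℚ) : ℝ)^2 < ((2:ℚ):ℝ) := by exact_mod_cast h
      push_cast at this; linarith
    have := (Real.lt_sqrt h0).mpr h'
    linarith

/-- The admissible ratios `r = p/q` with regular `1 < p ≤ 125`, `1 < q ≤ 125`,
`1 < r < 1 + √2` and `r ≥ 9/5` are exactly the fifteen Plimpton 322 ratios
together with the single extra ratio `125/64`. -/
theorem plimpton_ratios_bound_125 :
    {r : ℚ | ∃ p q : ℕ, Regular p ∧ Regular q ∧ 1 < p ∧ p ≤ 125 ∧ 1 < q ∧ q ≤ 125 ∧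
        r = (p : ℚ) / q ∧ 1 < (r : ℝ) ∧ (r : ℝ) < 1 + Real.sqrt 2 ∧ 9 / 5 ≤ r} =
    ({12/5, 64/27, 75/32, 125/54, 9/4, 20/9, 54/25, 32/15, 25/12, 81/40, 2,
      48/25, 15/8, 50/27, 9/5} : Set ℚ) ∪ {125/64} := by
  ext r
  simp only [Set.mem_setOf_eq, Set.mem_union, Set.mem_insert_iff, Set.mem_singleton_iff]
  constructor
  · rintro ⟨p, q, hp, hq, hp1, hp125, hq1, hq125, hr, hr1, hr2, hr95⟩
    have h1q : (1:ℚ) < r := by exact_mod_cast hr1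
    have hsq : (r - 1)^2 < 2 := (sqrt_cond h1q).mp hr2
    have hpL := regular_mem hp hp1 hp125
    have hqL := regular_mem hq hq1 hq125
    have hq0 : (0:ℚ) < (q:ℚ) := by exact_mod_cast Nat.lt_of_lt_of_le Nat.zero_lt_one hq1.le
    -- 9*q ≤ 5*p
    have h95 : 9 * q ≤ 5 * p := by
      have : (9:ℚ)/5 ≤ (p:ℚ)/q := hr ▸ hr95
      rw [div_le_div_iff₀ (by norm_num) hq0] at this
      have : (9:ℚ) * q ≤ 5 * p := by linarith
      exact_mod_cast this
    have hqp : q < p := by by_contra hh; push_neg at hh; omega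
    -- (p-q)^2 < 2*q^2
    have hsub : (p - q)^2 < 2 * q^2 := by
      rw [hr] at hsq
      rw [div_sub_one hq0.ne'] at hsq
      rw [div_pow, div_lt_iff₀ (by positivity)] at hsq
      have hcast : ((p:ℚ) - q) = ((p - q : ℕ) : ℚ) := by
        push_cast [Nat.cast_sub hqp.le]; ring
      rw [hcast] at hsq
      have : (((p - q : ℕ) : ℚ))^2 < 2 * ((q:ℚ))^2 := hsq
      exact_mod_cast this
    have := key p hpL q hqL h95 hsub
    rcases this with h|h|h|h|h|h|h|h|h|h|h|h|h|h|h|h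
    · exact Or.inl (Or.inl (by rw [hr, conv p q 5 12 (by omega) (by norm_num) h]; norm_num))
    · refine Or.inl (Or.inr (Or.inl ?_)); rw [hr, conv p q 27 64 (by omega) (by norm_num) h]; norm_num
    · refine Or.inl (Or.inr (Or.inr (Or.inl ?_))); rw [hr, conv p q 32 75 (by omega) (by norm_num) h]; norm_num
    · refine Or.inl (Or.inr (Or.inr (Or.inr (Or.inl ?_)))); rw [hr, conv p q 54 125 (by omega) (by norm_num) h]; norm_num
    · refine Or.inl (Or.inr (Or.inr (Or.inr (Or.inr (Or.inl ?_))))); rw [hr, conv p q 4 9 (by omega) (by norm_num) h]; norm_num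
    · refine Or.inl (Or.inr (Or.inr (Or.inr (Or.inr (Or.inr (Or.inl ?_)))))); rw [hr, conv p q 9 20 (by omega) (by norm_num) h]; norm_num
    · refine Or.inl (Or.inr (Or.inr (Or.inr (Or.inr (Or.inr (Or.inr (Or.inl ?_))))))); rw [hr, conv p q 25 54 (by omega) (by norm_num) h]; norm_num
    · refine Or.inl (Or.inr (Or.inr (Or.inr (Or.inr (Or.inr (Or.inr (Or.inr (Or.inl ?_)))))))); rw [hr, conv p q 15 32 (by omega) (by norm_num) h]; norm_num
    · refine Or.inl (Or.inr (Or.inr (Or.inr (Or.inr (Or.inr (Or.inr (Or.inr (Or.inr (Or.inl ?_))))))))); rw [hr, conv p q 12 25 (by omega) (by norm_num) h]; norm_num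
    · refine Or.inl (Or.inr (Or.inr (Or.inr (Or.inr (Or.inr (Or.inr (Or.inr (Or.inr (Or.inr (Or.inl ?_)))))))))); rw [hr, conv p q 40 81 (by omega) (by norm_num) h]; norm_num
    · refine Or.inl (Or.inr (Or.inr (Or.inr (Or.inr (Or.inr (Or.inr (Or.inr (Or.inr (Or.inr (Or.inr (Or.inl ?_))))))))))); rw [hr, conv p q 1 2 (by omega) (by norm_num) (by omega)]; norm_num
    · refine Or.inl (Or.inr (Or.inr (Or.inr (Or.inr (Or.inr (Or.inr (Or.inr (Or.inr (Or.inr (Or.inr (Or.inr (Or.inl ?_)))))))))))); rw [hr, conv p q 25 48 (by omega) (by norm_num) h]; norm_num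
    · refine Or.inl (Or.inr (Or.inr (Or.inr (Or.inr (Or.inr (Or.inr (Or.inr (Or.inr (Or.inr (Or.inr (Or.inr (Or.inr (Or.inl ?_))))))))))))); rw [hr, conv p q 8 15 (by omega) (by norm_num) h]; norm_num
    · refine Or.inl (Or.inr (Or.inr (Or.inr (Or.inr (Or.inr (Or.inr (Or.inr (Or.inr (Or.inr (Or.inr (Or.inr (Or.inr (Or.inr (Or.inl ?_)))))))))))))); rw [hr, conv p q 27 50 (by omega) (by norm_num) h]; norm_num
    · refine Or.inl (Or.inr (Or.inr (Or.inr (Or.inr (Or.inr (Or.inr (Or.inr (Or.inr (Or.inr (Or.inr (Or.inr (Or.inr (Or.inr (Or.inr ?_)))))))))))))); rw [hr, conv p q 5 9 (by omega) (by norm_num) h]; norm_num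
    · exact Or.inr (by rw [hr, conv p q 64 125 (by omega) (by norm_num) h]; norm_num)
  · intro h
    have build : ∀ (p q : ℕ), Regular p → Regular q → 1 < p → p ≤ 125 → 1 < q → q ≤ 125 →
        r = (p:ℚ)/q → (9:ℚ)/5 ≤ r → (r - 1)^2 < 2 →
        (∃ p q : ℕ, Regular p ∧ Regular q ∧ 1 < p ∧ p ≤ 125 ∧ 1 < q ∧ q ≤ 125 ∧
          r = (p : ℚ) / q ∧ 1 < (r : ℝ) ∧ (r : ℝ) < 1 + Real.sqrt 2 ∧ 9 / 5 ≤ r) := by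
      intro p q hp hq hp1 hp125 hq1 hq125 hr h95 hsq
      have h1q : (1:ℚ) < r := by linarith
      refine ⟨p, q, hp, hq, hp1, hp125, hq1, hq125, hr, by exact_mod_cast h1q,
        (sqrt_cond h1q).mpr hsq, h95⟩
    rcases h with (rfl|rfl|rfl|rfl|rfl|rfl|rfl|rfl|rfl|rfl|rfl|rfl|rfl|rfl|rfl)|rfl
    · exact build 12 5 ⟨2,1,0,rfl⟩ ⟨0,0,1,rfl⟩ (by norm_num) (by norm_num) (by norm_num) (by norm_num) (by norm_num) (by norm_num) (by norm_num)
    · exact build 64 27 ⟨6,0,0,rfl⟩ ⟨0,3,0,rfl⟩ (by norm_num) (by norm_num) (by norm_num) (by norm_num) (by norm_num) (by norm_num) (by norm_num)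
    · exact build 75 32 ⟨0,1,2,rfl⟩ ⟨5,0,0,rfl⟩ (by norm_num) (by norm_num) (by norm_num) (by norm_num) (by norm_num) (by norm_num) (by norm_num)
    · exact build 125 54 ⟨0,0,3,rfl⟩ ⟨1,3,0,rfl⟩ (by norm_num) (by norm_num) (by norm_num) (by norm_num) (by norm_num) (by norm_num) (by norm_num)
    · exact build 9 4 ⟨0,2,0,rfl⟩ ⟨2,0,0,rfl⟩ (by norm_num) (by norm_num) (by norm_num) (by norm_num) (by norm_num) (by norm_num) (by norm_num)
    · exact build 20 9 ⟨2,0,1,rfl⟩ ⟨0,2,0,rfl⟩ (by norm_num) (by norm_num) (by norm_num) (by norm_num) (by norm_num) (by norm_num) (by norm_num)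
    · exact build 54 25 ⟨1,3,0,rfl⟩ ⟨0,0,2,rfl⟩ (by norm_num) (by norm_num) (by norm_num) (by norm_num) (by norm_num) (by norm_num) (by norm_num)
    · exact build 32 15 ⟨5,0,0,rfl⟩ ⟨0,1,1,rfl⟩ (by norm_num) (by norm_num) (by norm_num) (by norm_num) (by norm_num) (by norm_num) (by norm_num)
    · exact build 25 12 ⟨0,0,2,rfl⟩ ⟨2,1,0,rfl⟩ (by norm_num) (by norm_num) (by norm_num) (by norm_num) (by norm_num) (by norm_num) (by norm_num)
    · exact build 81 40 ⟨0,4,0,rfl⟩ ⟨3,0,1,rfl⟩ (by norm_num) (by norm_num) (by norm_num) (by norm_num) (by norm_num) (by norm_num) (by norm_num)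
    · exact build 4 2 ⟨2,0,0,rfl⟩ ⟨1,0,0,rfl⟩ (by norm_num) (by norm_num) (by norm_num) (by norm_num) (by norm_num) (by norm_num) (by norm_num)
    · exact build 48 25 ⟨4,1,0,rfl⟩ ⟨0,0,2,rfl⟩ (by norm_num) (by norm_num) (by norm_num) (by norm_num) (by norm_num) (by norm_num) (by norm_num)
    · exact build 15 8 ⟨0,1,1,rfl⟩ ⟨3,0,0,rfl⟩ (by norm_num) (by norm_num) (by norm_num) (by norm_num) (by norm_num) (by norm_num) (by norm_num)
    · exact build 50 27 ⟨1,0,2,rfl⟩ ⟨0,3,0,rfl⟩ (by norm_num) (by norm_num) (by norm_num) (by norm_num) (by norm_num) (by norm_num) (by norm_num)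
    · exact build 9 5 ⟨0,2,0,rfl⟩ ⟨0,0,1,rfl⟩ (by norm_num) (by norm_num) (by norm_num) (by norm_num) (by norm_num) (by norm_num) (by norm_num)
    · exact build 125 64 ⟨0,0,3,rfl⟩ ⟨6,0,0,rfl⟩ (by norm_num) (by norm_num) (by norm_num) (by norm_num) (by norm_num) (by norm_num) (by norm_num)
end
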